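/- Let $D=(\delta_1+\tau_1,\delta_2+\tau_2)$ be a derivation on $\mathcal{A}\ltimes\mathcal{U}$. Then the separating space $\mathfrak{S}(\tau_1)$ is a two-sided ideal of $\mathcal{A}$, and if $\tau_2$ is continuous then $\mathfrak{S}(\tau_1)\subseteq ann_{\mathcal{A}}\mathcal{U}$. -/

import Mathlib

open Filter Topology

/-- Compatible Banach `A`-bimodule structure on the Banach algebra `U`,
giving rise to the semidirect product `A ⋉ U`. -/
structure SDP (A : Type*) (U : Type*) [NonUnitalNormedRing A] [NonUnitalNormedRing U] where
  l : A → U → U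
  r : U → A → U
  l_add₁ : ∀ (a b : A) (x : U), l (a + b) x = l a x + l b x
  l_add₂ : ∀ (a : A) (x y : U), l a (x + y) = l a x + l a y
  r_add₁ : ∀ (x y : U) (a : A), r (x + y) a = r x a + r y a
  r_add₂ : ∀ (x : U) (a b : A), r x (a + b) = r x a + r x b
  l_mul : ∀ (a b : A) (x : U), l (a * b) x = l a (l b x)
  r_mul : ∀ (x : U) (a b : A), r x (a * b) = r (r x a) b
  l_r : ∀ (a : A) (x : U) (b : A), r (l a x) b = l a (r x b)
  compat₁ : ∀ (a : A) (x y : U), (l a x) * y = l a (x * y)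
  compat₂ : ∀ (x y : U) (a : A), r (x * y) a = x * (r y a)
  compat₃ : ∀ (x : U) (a : A) (y : U), (r x a) * y = x * (l a y)
  norm_l : ∀ (a : A) (x : U), ‖l a x‖ ≤ ‖a‖ * ‖x‖
  norm_r : ∀ (x : U) (a : A), ‖r x a‖ ≤ ‖x‖ * ‖a‖

variable {A U : Type*} [NonUnitalNormedRing A] [NonUnitalNormedRing U]

/-- The semidirect product multiplication on `A × U`. -/
def SDP.mul (S : SDP A U) (p q : A × U) : A × U :=
  (p.1 * q.1, S.l p.1 q.2 + S.r p.2 q.1 + p.2 * q.2)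

/-- `D` is a derivation on the semidirect product `A ⋉ U`. -/
def SDP.IsDer (S : SDP A U) (D : A × U → A × U) : Prop :=
  ∀ p q : A × U, D (S.mul p q) = S.mul p (D q) + S.mul (D p) q

/-- The map on `A × U` assembled from components `δ₁, δ₂, τ₁, τ₂`. -/
def derComp (δ₁ : A → A) (δ₂ : A → U) (τ₁ : U → A) (τ₂ : U → U) : A × U → A × U :=
  fun p => (δ₁ p.1 + τ₁ p.2, δ₂ p.1 + τ₂ p.2)

/-- The annihilator `ann_A U`. -/
def SDP.ann (S : SDP A U) : Set A := {a | (∀ x, S.l a x = 0) ∧ (∀ x, S.r x a = 0)}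

/-- The separating space of a linear map between Banach spaces. -/
def sepSpace {X Y : Type*} [NormedAddCommGroup X] [NormedAddCommGroup Y] (T : X → Y) : Set Y :=
  {y | ∃ u : ℕ → X, Tendsto u atTop (nhds 0) ∧ Tendsto (fun n => T (u n)) atTop (nhds y)}

/-- For a derivation `D = (δ₁ + τ₁, δ₂ + τ₂)` on `A ⋉ U`, the separating space
`𝔖(τ₁)` is a two-sided ideal of `A`, and if `τ₂` is continuous then
`𝔖(τ₁) ⊆ ann_A U`. -/
theorem stmt_11 [NormedSpace ℂ A] [NormedSpace ℂ U] (S : SDP A U)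
    (δ₁ : A → A) (δ₂ : A → U) (τ₁ : U → A) (τ₂ : U → U)
    (hδ₁ : IsLinearMap ℂ δ₁) (hδ₂ : IsLinearMap ℂ δ₂)
    (hτ₁ : IsLinearMap ℂ τ₁) (hτ₂ : IsLinearMap ℂ τ₂)
    (hD : S.IsDer (derComp δ₁ δ₂ τ₁ τ₂)) :
    ((0 : A) ∈ sepSpace τ₁) ∧
    (∀ a b : A, a ∈ sepSpace τ₁ → b ∈ sepSpace τ₁ → a + b ∈ sepSpace τ₁) ∧
    (∀ a ∈ sepSpace τ₁, ∀ b : A, b * a ∈ sepSpace τ₁ ∧ a * b ∈ sepSpace τ₁) ∧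
    (Continuous τ₂ → sepSpace τ₁ ⊆ S.ann) := by
  -- zero lemmas for the module actions
  have l0 : ∀ a : A, S.l a 0 = 0 := fun a => by
    have h := S.l_add₂ a 0 0; simp only [add_zero] at h; exact left_eq_add.mp h
  have lz : ∀ x : U, S.l 0 x = 0 := fun x => by
    have h := S.l_add₁ 0 0 x; simp only [add_zero] at h; exact left_eq_add.mp h
  have r0 : ∀ x : U, S.r x 0 = 0 := fun x => by
    have h := S.r_add₂ x 0 0; simp only [add_zero] at h; exact left_eq_add.mp h
  have rz : ∀ a : A, S.r 0 a = 0 := fun a => by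
    have h := S.r_add₁ 0 0 a; simp only [add_zero] at h; exact left_eq_add.mp h
  -- component identities from the derivation property
  have key_l : ∀ (a : A) (y : U), τ₁ (S.l a y) = a * τ₁ y := by
    intro a y
    have h := congrArg Prod.fst (hD (a, 0) (0, y))
    simpa [SDP.mul, derComp, l0, lz, r0, rz, hδ₁.map_zero, hδ₂.map_zero,
      hτ₁.map_zero, hτ₂.map_zero] using h
  have key_r : ∀ (x : U) (a : A), τ₁ (S.r x a) = τ₁ x * a := by
    intro x a
    have h := congrArg Prod.fst (hD ((0 : A), x) (a, 0))
    simpa [SDP.mul, derComp, l0, lz, r0, rz, hδ₁.map_zero, hδ₂.map_zero,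
      hτ₁.map_zero, hτ₂.map_zero] using h
  have key_mul : ∀ x y : U,
      τ₂ (x * y) = S.r x (τ₁ y) + x * τ₂ y + (S.l (τ₁ x) y + τ₂ x * y) := by
    intro x y
    have h := congrArg Prod.snd (hD ((0 : A), x) ((0 : A), y))
    simpa [SDP.mul, derComp, l0, lz, r0, rz, hδ₁.map_zero, hδ₂.map_zero,
      hτ₁.map_zero, hτ₂.map_zero] using h
  -- norm tendsto helpers
  have norm_to_zero : ∀ {u : ℕ → U}, Tendsto u atTop (nhds 0) →
      Tendsto (fun n => ‖u n‖) atTop (nhds 0) := by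
    intro u hu
    simpa using hu.norm
  refine ⟨⟨fun _ => 0, tendsto_const_nhds, by simp [hτ₁.map_zero]⟩,
    ?_, ?_, ?_⟩
  · rintro a b ⟨u, hu0, hu⟩ ⟨v, hv0, hv⟩
    exact ⟨fun n => u n + v n, by simpa using hu0.add hv0,
      by simpa [hτ₁.map_add] using hu.add hv⟩
  · rintro a ⟨u, hu0, hu⟩ b
    constructor
    · refine ⟨fun n => S.l b (u n), ?_, ?_⟩
      · refine squeeze_zero_norm (fun n => S.norm_l b (u n)) ?_
        simpa using (norm_to_zero hu0).const_mul ‖b‖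
      · simpa [key_l] using hu.const_mul b
    · refine ⟨fun n => S.r (u n) b, ?_, ?_⟩
      · refine squeeze_zero_norm (fun n => S.norm_r (u n) b) ?_
        simpa using (norm_to_zero hu0).mul_const ‖b‖
      · simpa [key_r] using hu.mul_const b
  · rintro hcont a ⟨u, hu0, hu⟩
    have hτ₂0 : τ₂ 0 = 0 := hτ₂.map_zero
    -- l (τ₁ (u n)) y tends to l a y
    have hl_tendsto : ∀ y : U,
        Tendsto (fun n => S.l (τ₁ (u n)) y) atTop (nhds (S.l a y)) := by
      intro y
      rw [tendsto_iff_norm_sub_tendsto_zero]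
      have hsub : ∀ n, S.l (τ₁ (u n)) y - S.l a y = S.l (τ₁ (u n) - a) y := by
        intro n
        have h := S.l_add₁ (τ₁ (u n) - a) a y
        rw [sub_add_cancel] at h
        rw [h]; abel
      refine squeeze_zero_norm (a := fun n => ‖τ₁ (u n) - a‖ * ‖y‖) (fun n => ?_) ?_
      · rw [norm_norm, hsub n]; exact S.norm_l _ y
      · have : Tendsto (fun n => ‖τ₁ (u n) - a‖) atTop (nhds 0) := by
          rw [← tendsto_iff_norm_sub_tendsto_zero] ; exact hu
        simpa using this.mul_const ‖y‖
    have hr_tendsto : ∀ x : U,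
        Tendsto (fun n => S.r x (τ₁ (u n))) atTop (nhds (S.r x a)) := by
      intro x
      rw [tendsto_iff_norm_sub_tendsto_zero]
      have hsub : ∀ n, S.r x (τ₁ (u n)) - S.r x a = S.r x (τ₁ (u n) - a) := by
        intro n
        have h := S.r_add₂ x (τ₁ (u n) - a) a
        rw [sub_add_cancel] at h
        rw [h]; abel
      refine squeeze_zero_norm (a := fun n => ‖x‖ * ‖τ₁ (u n) - a‖) (fun n => ?_) ?_
      · rw [norm_norm, hsub n]; exact S.norm_r x _
      · have : Tendsto (fun n => ‖τ₁ (u n) - a‖) atTop (nhds 0) := by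
          rw [← tendsto_iff_norm_sub_tendsto_zero] ; exact hu
        simpa using this.const_mul ‖x‖
    have hτ₂u : Tendsto (fun n => τ₂ (u n)) atTop (nhds 0) := by
      simpa [hτ₂0, Function.comp_def] using (hcont.tendsto 0).comp hu0
    constructor
    · intro y
      -- l (τ₁ (u n)) y = τ₂ (u n * y) - r (u n) (τ₁ y) - u n * τ₂ y - τ₂ (u n) * y
      have heq : ∀ n, S.l (τ₁ (u n)) y
          = τ₂ (u n * y) - S.r (u n) (τ₁ y) - u n * τ₂ y - τ₂ (u n) * y := by
        intro n
        have h := key_mul (u n) y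
        rw [h]; abel
      have hlim : Tendsto (fun n => S.l (τ₁ (u n)) y) atTop (nhds 0) := by
        have h1 : Tendsto (fun n => τ₂ (u n * y)) atTop (nhds 0) := by
          have : Tendsto (fun n => u n * y) atTop (nhds 0) := by
            simpa using hu0.mul_const y
          simpa [hτ₂0, Function.comp_def] using (hcont.tendsto 0).comp this
        have h2 : Tendsto (fun n => S.r (u n) (τ₁ y)) atTop (nhds 0) := by
          refine squeeze_zero_norm (fun n => S.norm_r (u n) (τ₁ y)) ?_
          simpa using (norm_to_zero hu0).mul_const ‖τ₁ y‖
        have h3 : Tendsto (fun n => u n * τ₂ y) atTop (nhds 0) := by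
          simpa using hu0.mul_const (τ₂ y)
        have h4 : Tendsto (fun n => τ₂ (u n) * y) atTop (nhds 0) := by
          simpa using hτ₂u.mul_const y
        have := ((h1.sub h2).sub h3).sub h4
        simp only [sub_zero, zero_sub] at this ⊢
        simpa [← heq] using this
      exact tendsto_nhds_unique (hl_tendsto y) hlim
    · intro x
      have heq : ∀ n, S.r x (τ₁ (u n))
          = τ₂ (x * u n) - x * τ₂ (u n) - S.l (τ₁ x) (u n) - τ₂ x * u n := by
        intro n
        have h := key_mul x (u n)
        rw [h]; abel
      have hlim : Tendsto (fun n => S.r x (τ₁ (u n))) atTop (nhds 0) := by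
        have h1 : Tendsto (fun n => τ₂ (x * u n)) atTop (nhds 0) := by
          have : Tendsto (fun n => x * u n) atTop (nhds 0) := by
            simpa using hu0.const_mul x
          simpa [hτ₂0, Function.comp_def] using (hcont.tendsto 0).comp this
        have h2 : Tendsto (fun n => x * τ₂ (u n)) atTop (nhds 0) := by
          simpa using hτ₂u.const_mul x
        have h3 : Tendsto (fun n => S.l (τ₁ x) (u n)) atTop (nhds 0) := by
          refine squeeze_zero_norm (fun n => S.norm_l (τ₁ x) (u n)) ?_
          simpa using (norm_to_zero hu0).const_mul ‖τ₁ x‖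
        have h4 : Tendsto (fun n => τ₂ x * u n) atTop (nhds 0) := by
          simpa using hu0.const_mul (τ₂ x)
        have := ((h1.sub h2).sub h3).sub h4
        simp only [sub_zero, zero_sub] at this ⊢
        simpa [← heq] using this
      exact tendsto_nhds_unique (hr_tendsto x) hlim
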